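/- arXiv:1410.5590 — 2 statements merged into one kernel-verified Lean document; each statement's English description precedes it below -/
import Mathlib

section
/- For any outward pointing field of arrows on A_{n+1}, the number r of repelling interior nodes and the number a of attracting interior nodes satisfy r − a = n + 1. -/
/-- A unit lattice square with lower-left corner `c` belongs to the Aztec diamond of
order `m` iff it intersects the open region `{(x,y) : |x|+|y| < m}`; equivalently the
distance-to-origin data of the cell satisfies this inequality. -/
def aztecCell (m : ℕ) (c : ℤ × ℤ) : Prop :=
  max c.1 (-c.1 - 1) + max c.2 (-c.2 - 1) < (m : ℤ)

instance (m : ℕ) : DecidablePred (aztecCell m) := fun c => by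
  unfold aztecCell; infer_instance

/-- Two unit lattice squares are adjacent (form a domino) iff they share a full edge. -/
def Adjacent (c d : ℤ × ℤ) : Prop :=
  (c.1 = d.1 ∧ |c.2 - d.2| = 1) ∨ (c.2 = d.2 ∧ |c.1 - d.1| = 1)

/-- A domino tiling of the Aztec diamond of order `m`, encoded as the involution
matching each unit square of the region with the other half of its domino,
and fixing everything outside the region. -/
def IsTiling (m : ℕ) (t : ℤ × ℤ → ℤ × ℤ) : Prop :=
  (∀ c, aztecCell m c → aztecCell m (t c) ∧ t (t c) = c ∧ Adjacent c (t c)) ∧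
  (∀ c, ¬ aztecCell m c → t c = c)

/-- `p` is a lattice point of the Aztec diamond of order `m` (a corner of one of its cells). -/
def aztecPoint (m : ℕ) (p : ℤ × ℤ) : Prop :=
  max (|p.1| - 1) 0 + max (|p.2| - 1) 0 < (m : ℤ)

instance (m : ℕ) : DecidablePred (aztecPoint m) := fun p => by
  unfold aztecPoint; infer_instance

/-- A node: a lattice point `(i,j)` of `A_{n+1}` with `i + j ≡ n (mod 2)`. -/
def IsNode (n : ℕ) (p : ℤ × ℤ) : Prop :=
  aztecPoint (n + 1) p ∧ (p.1 + p.2 - (n : ℤ)) % 2 = 0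

/-- An interior node: a node contained in `A_n`. -/
def InteriorNode (n : ℕ) (p : ℤ × ℤ) : Prop :=
  IsNode n p ∧ aztecPoint n p

/-- `p` is a corner of the unit square with lower-left corner `c`. -/
def SqCorner (c p : ℤ × ℤ) : Prop :=
  (p.1 = c.1 ∨ p.1 = c.1 + 1) ∧ (p.2 = c.2 ∨ p.2 = c.2 + 1)

instance (c p : ℤ × ℤ) : Decidable (SqCorner c p) := by
  unfold SqCorner; infer_instance

/-- The two corners of the lattice square `c` that are nodes; they are diagonally opposite. -/
def cellDiag (n : ℕ) (c : ℤ × ℤ) : (ℤ × ℤ) × (ℤ × ℤ) :=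
  if (c.1 + c.2 - (n : ℤ)) % 2 = 0 then (c, (c.1 + 1, c.2 + 1))
  else ((c.1 + 1, c.2), (c.1, c.2 + 1))

/-- `A` assigns to each lattice square the head of its arrow.  An interior node `N` is
attracting if all four adjacent arrows point towards `N`. -/
def Attracting (A : ℤ × ℤ → ℤ × ℤ) (N : ℤ × ℤ) : Prop :=
  A (N.1 - 1, N.2 - 1) = N ∧ A (N.1, N.2 - 1) = N ∧ A (N.1 - 1, N.2) = N ∧ A N = N

/-- An interior node `N` is repelling if all four adjacent arrows point away from `N`
(towards the opposite corner of the respective square). -/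
def Repelling (A : ℤ × ℤ → ℤ × ℤ) (N : ℤ × ℤ) : Prop :=
  A (N.1 - 1, N.2 - 1) = (N.1 - 1, N.2 - 1) ∧ A (N.1, N.2 - 1) = (N.1 + 1, N.2 - 1) ∧
  A (N.1 - 1, N.2) = (N.1 - 1, N.2 + 1) ∧ A N = (N.1 + 1, N.2 + 1)

/-- An interior node `N` is transient if any two collinear arrows adjacent to `N`
point in the same direction. -/
def Transient (A : ℤ × ℤ → ℤ × ℤ) (N : ℤ × ℤ) : Prop :=
  ((A (N.1 - 1, N.2 - 1) = N) ↔ (A N = (N.1 + 1, N.2 + 1))) ∧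
  ((A (N.1, N.2 - 1) = N) ↔ (A (N.1 - 1, N.2) = (N.1 - 1, N.2 + 1)))

/-- A field of arrows on `A_{n+1}`: in each lattice square an arrow joining its two
corner nodes, such that every interior node is attracting, repelling or transient. -/
def IsArrowField (n : ℕ) (A : ℤ × ℤ → ℤ × ℤ) : Prop :=
  (∀ c, aztecCell (n + 1) c → A c = (cellDiag n c).1 ∨ A c = (cellDiag n c).2) ∧
  (∀ N, InteriorNode n N → Attracting A N ∨ Repelling A N ∨ Transient A N)

/-- A boundary square: a lattice square of `A_{n+1}` not contained in `A_n`. -/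
def BoundaryCell (n : ℕ) (c : ℤ × ℤ) : Prop := aztecCell (n + 1) c ∧ ¬ aztecCell n c

/-- The field points outward: in every boundary square the arrow points towards the
corner node on the boundary of `A_{n+1}` (i.e. not an interior node). -/
def Outward (n : ℕ) (A : ℤ × ℤ → ℤ × ℤ) : Prop :=
  ∀ c, BoundaryCell n c → ¬ aztecPoint n (A c)

/-- The field points inward: in every boundary square the arrow points towards the
interior node. -/
def Inward (n : ℕ) (A : ℤ × ℤ → ℤ × ℤ) : Prop :=
  ∀ c, BoundaryCell n c → aztecPoint n (A c)

/-- The number of repelling interior nodes of a field of arrows. -/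
noncomputable def repCount (n : ℕ) (A : ℤ × ℤ → ℤ × ℤ) : ℕ :=
  Set.ncard {N : ℤ × ℤ | InteriorNode n N ∧ Repelling A N}

/-- The field of arrows associated to a tiling: in each lattice square the arrow points
towards the corner node of the domino containing that square (the node corner of the
square which is not a corner of its partner square). -/
def tilingArrow (n : ℕ) (t : ℤ × ℤ → ℤ × ℤ) (c : ℤ × ℤ) : ℤ × ℤ :=
  if SqCorner (t c) (cellDiag n c).1 then (cellDiag n c).2 else (cellDiag n c).1

instance (n : ℕ) : DecidablePred (InteriorNode n) := fun p => by
  unfold InteriorNode IsNode; infer_instance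

/-- the tail of the arrow in cell `c` : the diagonal corner which is not the head. -/
def tl (n : ℕ) (A : ℤ × ℤ → ℤ × ℤ) (c : ℤ × ℤ) : ℤ × ℤ :=
  if A c = (cellDiag n c).1 then (cellDiag n c).2 else (cellDiag n c).1

noncomputable def CF (n : ℕ) : Finset (ℤ × ℤ) :=
  (Finset.Icc (-(n:ℤ)-2) ((n:ℤ)+2) ×ˢ Finset.Icc (-(n:ℤ)-2) ((n:ℤ)+2)).filter (aztecCell (n+1))

noncomputable def IF (n : ℕ) : Finset (ℤ × ℤ) :=
  (Finset.Icc (-(n:ℤ)-2) ((n:ℤ)+2) ×ˢ Finset.Icc (-(n:ℤ)-2) ((n:ℤ)+2)).filter (InteriorNode n)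

lemma mem_CF {n : ℕ} {c : ℤ × ℤ} : c ∈ CF n ↔ aztecCell (n+1) c := by
  constructor
  · exact fun h => (Finset.mem_filter.1 h).2
  · intro h
    refine Finset.mem_filter.2 ⟨?_, h⟩
    simp only [Finset.mem_product, Finset.mem_Icc]
    unfold aztecCell at h
    omega

lemma mem_IF {n : ℕ} {p : ℤ × ℤ} : p ∈ IF n ↔ InteriorNode n p := by
  constructor
  · exact fun h => (Finset.mem_filter.1 h).2
  · intro h
    refine Finset.mem_filter.2 ⟨?_, h⟩
    simp only [Finset.mem_product, Finset.mem_Icc]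
    obtain ⟨⟨h1, _⟩, _⟩ := h
    unfold aztecPoint at h1
    simp only [abs_eq_max_neg] at h1
    omega

lemma cellDiag_even {n : ℕ} {c : ℤ × ℤ} (h : (c.1 + c.2 - (n:ℤ)) % 2 = 0) :
    cellDiag n c = (c, (c.1 + 1, c.2 + 1)) := by
  unfold cellDiag; rw [if_pos h]

lemma cellDiag_odd {n : ℕ} {c : ℤ × ℤ} (h : ¬ (c.1 + c.2 - (n:ℤ)) % 2 = 0) :
    cellDiag n c = ((c.1 + 1, c.2), (c.1, c.2 + 1)) := by
  unfold cellDiag; rw [if_neg h]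

lemma diag_ne {n : ℕ} {c : ℤ × ℤ} : (cellDiag n c).1 ≠ (cellDiag n c).2 := by
  by_cases hp : (c.1 + c.2 - (n:ℤ)) % 2 = 0
  · rw [cellDiag_even hp]; simp [Prod.ext_iff]
  · rw [cellDiag_odd hp]; simp [Prod.ext_iff]

lemma diag_interior {n : ℕ} {c : ℤ × ℤ} (h : aztecCell n c) :
    InteriorNode n (cellDiag n c).1 ∧ InteriorNode n (cellDiag n c).2 := by
  unfold aztecCell at h
  unfold cellDiag
  split <;> rename_i hp <;>
    simp only [InteriorNode, IsNode, aztecPoint, abs_eq_max_neg] <;>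
    push_cast <;> omega

set_option maxHeartbeats 1000000 in
lemma bd_corner {n : ℕ} (hn : 1 ≤ n) {c : ℤ × ℤ} (h1 : aztecCell (n+1) c)
    (h2 : ¬ aztecCell n c) :
    InteriorNode n (cellDiag n c).1 ∨ InteriorNode n (cellDiag n c).2 := by
  unfold aztecCell at h1 h2
  unfold cellDiag
  split <;> rename_i hp <;>
    simp only [InteriorNode, IsNode, aztecPoint, abs_eq_max_neg] <;>
    push_cast at * <;> omega

/-- the signed contribution of cell `c` to node `N` : +1 if the arrow leaves `N`,
−1 if it enters `N`, 0 otherwise. -/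
def trm (n : ℕ) (A : ℤ × ℤ → ℤ × ℤ) (N c : ℤ × ℤ) : ℤ :=
  (if tl n A c = N then 1 else 0) - (if A c = N then 1 else 0)

lemma trm_eval {n : ℕ} {A : ℤ × ℤ → ℤ × ℤ} {c N d1 d2 : ℤ × ℤ}
    (hcd : cellDiag n c = (d1, d2)) (hne : d1 ≠ d2)
    (hN : N = d1 ∨ N = d2) (hAc : A c = d1 ∨ A c = d2) :
    trm n A N c = if A c = N then -1 else 1 := by
  unfold trm tl
  rw [hcd]
  rcases hN with rfl | rfl <;> rcases hAc with h | h <;>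
    simp [h, hne, Ne.symm hne]

lemma diag_mem_four {n : ℕ} {c N : ℤ × ℤ}
    (h : (cellDiag n c).1 = N ∨ (cellDiag n c).2 = N) :
    c = (N.1 - 1, N.2 - 1) ∨ c = (N.1, N.2 - 1) ∨ c = (N.1 - 1, N.2) ∨ c = N := by
  by_cases hp : (c.1 + c.2 - (n:ℤ)) % 2 = 0
  · rw [cellDiag_even hp] at h
    simp only [Prod.ext_iff] at h ⊢
    omega
  · rw [cellDiag_odd hp] at h
    simp only [Prod.ext_iff] at h ⊢
    omega

lemma four_cells {n : ℕ} {N : ℤ × ℤ} (hN : InteriorNode n N) :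
    aztecCell (n+1) (N.1 - 1, N.2 - 1) ∧ aztecCell (n+1) (N.1, N.2 - 1) ∧
    aztecCell (n+1) (N.1 - 1, N.2) ∧ aztecCell (n+1) N ∧
    (N.1 + N.2 - (n:ℤ)) % 2 = 0 := by
  obtain ⟨⟨h1, hpar⟩, h2⟩ := hN
  unfold aztecPoint at h1 h2
  unfold aztecCell
  simp only [abs_eq_max_neg] at h1 h2
  push_cast at *
  refine ⟨?_, ?_, ?_, ?_, hpar⟩ <;> omega

lemma not_rep_of_att {A : ℤ × ℤ → ℤ × ℤ} {N : ℤ × ℤ} (h : Attracting A N) :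
    ¬ Repelling A N := by
  intro hr
  have := h.2.2.2
  rw [hr.2.2.2] at this
  simp [Prod.ext_iff] at this

lemma not_att_of_tr {A : ℤ × ℤ → ℤ × ℤ} {N : ℤ × ℤ} (h : Transient A N) :
    ¬ Attracting A N := by
  intro ha
  have h2 := h.1.mp ha.1
  rw [ha.2.2.2] at h2
  simp [Prod.ext_iff] at h2

lemma not_rep_of_tr {A : ℤ × ℤ → ℤ × ℤ} {N : ℤ × ℤ} (h : Transient A N) :
    ¬ Repelling A N := by
  intro hr
  have h2 := h.1.mpr hr.2.2.2
  rw [hr.1] at h2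
  simp [Prod.ext_iff] at h2

instance (A : ℤ × ℤ → ℤ × ℤ) (N : ℤ × ℤ) : Decidable (Repelling A N) := by
  unfold Repelling; infer_instance
instance (A : ℤ × ℤ → ℤ × ℤ) (N : ℤ × ℤ) : Decidable (Attracting A N) := by
  unfold Attracting; infer_instance

set_option maxHeartbeats 1000000 in
lemma sum_trm {n : ℕ} {A : ℤ × ℤ → ℤ × ℤ} (hA : IsArrowField n A)
    {N : ℤ × ℤ} (hN : InteriorNode n N) :
    ∑ c ∈ CF n, trm n A N c =
      (if Repelling A N then (4:ℤ) else 0) - (if Attracting A N then 4 else 0) := by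
  obtain ⟨hc1, hc2, hc3, hc4, hpar⟩ := four_cells hN
  -- cellDiag at the four neighbours
  have hd1 : cellDiag n (N.1 - 1, N.2 - 1) = ((N.1 - 1, N.2 - 1), N) := by
    rw [cellDiag_even (by dsimp only; omega)]
    simp [Prod.ext_iff]
  have hd2 : cellDiag n (N.1, N.2 - 1) = ((N.1 + 1, N.2 - 1), N) := by
    rw [cellDiag_odd (by dsimp only; omega)]
    simp [Prod.ext_iff]
  have hd3 : cellDiag n (N.1 - 1, N.2) = (N, (N.1 - 1, N.2 + 1)) := by
    rw [cellDiag_odd (by dsimp only; omega)]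
    simp [Prod.ext_iff]
  have hd4 : cellDiag n N = (N, (N.1 + 1, N.2 + 1)) := by
    rw [cellDiag_even hpar]
  have hne1 : ((N.1 - 1, N.2 - 1) : ℤ × ℤ) ≠ N := by simp [Prod.ext_iff]
  have hne2 : ((N.1 + 1, N.2 - 1) : ℤ × ℤ) ≠ N := by simp [Prod.ext_iff]
  have hne3 : N ≠ ((N.1 - 1, N.2 + 1) : ℤ × ℤ) := by simp [Prod.ext_iff]
  have hne4 : N ≠ ((N.1 + 1, N.2 + 1) : ℤ × ℤ) := by simp [Prod.ext_iff]
  have hA1 := hA.1 _ hc1; rw [hd1] at hA1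
  have hA2 := hA.1 _ hc2; rw [hd2] at hA2
  have hA3 := hA.1 _ hc3; rw [hd3] at hA3
  have hA4 := hA.1 _ hc4; rw [hd4] at hA4
  have ht1 := trm_eval hd1 hne1 (Or.inr rfl) hA1
  have ht2 := trm_eval hd2 hne2 (Or.inr rfl) hA2
  have ht3 := trm_eval hd3 hne3 (Or.inl rfl) hA3
  have ht4 := trm_eval hd4 hne4 (Or.inl rfl) hA4
  -- restrict the sum to the four neighbouring cells
  have hsum : ∑ c ∈ CF n, trm n A N c =
      ∑ c ∈ ({(N.1 - 1, N.2 - 1), (N.1, N.2 - 1), (N.1 - 1, N.2), N} : Finset (ℤ × ℤ)),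
        trm n A N c := by
    refine (Finset.sum_subset ?_ ?_).symm
    · intro c hc
      simp only [Finset.mem_insert, Finset.mem_singleton] at hc
      rcases hc with rfl | rfl | rfl | rfl
      exacts [mem_CF.2 hc1, mem_CF.2 hc2, mem_CF.2 hc3, mem_CF.2 hc4]
    · intro c hc hcn
      simp only [Finset.mem_insert, Finset.mem_singleton] at hcn
      push_neg at hcn
      have hnd : (cellDiag n c).1 ≠ N ∧ (cellDiag n c).2 ≠ N := by
        constructor <;> intro h
        · rcases diag_mem_four (Or.inl h) with h' | h' | h' | h'
          exacts [hcn.1 h', hcn.2.1 h', hcn.2.2.1 h', hcn.2.2.2 h']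
        · rcases diag_mem_four (Or.inr h) with h' | h' | h' | h'
          exacts [hcn.1 h', hcn.2.1 h', hcn.2.2.1 h', hcn.2.2.2 h']
      have hAc := hA.1 c (mem_CF.1 hc)
      unfold trm tl
      rcases hAc with h | h
      · rw [if_pos h, if_neg hnd.2,
          if_neg (show ¬ (A c = N) by rw [h]; exact hnd.1)]
        ring
      · rw [if_neg (show ¬ (A c = (cellDiag n c).1) by rw [h]; exact Ne.symm diag_ne),
          if_neg hnd.1, if_neg (show ¬ (A c = N) by rw [h]; exact hnd.2)]
        ring
  rw [hsum]
  have hm1 : ((N.1 - 1, N.2 - 1) : ℤ × ℤ) ∉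
      ({(N.1, N.2 - 1), (N.1 - 1, N.2), N} : Finset (ℤ × ℤ)) := by
    simp [Prod.ext_iff]
  have hm2 : ((N.1, N.2 - 1) : ℤ × ℤ) ∉ ({(N.1 - 1, N.2), N} : Finset (ℤ × ℤ)) := by
    simp [Prod.ext_iff]
  have hm3 : ((N.1 - 1, N.2) : ℤ × ℤ) ∉ ({N} : Finset (ℤ × ℤ)) := by
    simp [Prod.ext_iff]
  rw [Finset.sum_insert hm1, Finset.sum_insert hm2, Finset.sum_insert hm3,
    Finset.sum_singleton, ht1, ht2, ht3, ht4]
  rcases hA.2 N hN with hAt | hRe | hTr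
  · obtain ⟨a1, a2, a3, a4⟩ := hAt
    rw [if_pos a1, if_pos a2, if_pos a3, if_pos a4,
      if_neg (not_rep_of_att ⟨a1, a2, a3, a4⟩), if_pos ⟨a1, a2, a3, a4⟩]
    norm_num
  · obtain ⟨r1, r2, r3, r4⟩ := hRe
    rw [if_neg (show ¬ (A (N.1 - 1, N.2 - 1) = N) by rw [r1]; exact hne1),
      if_neg (show ¬ (A (N.1, N.2 - 1) = N) by rw [r2]; exact hne2),
      if_neg (show ¬ (A (N.1 - 1, N.2) = N) by rw [r3]; exact Ne.symm hne3),
      if_neg (show ¬ (A N = N) by rw [r4]; exact Ne.symm hne4),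
      if_pos ⟨r1, r2, r3, r4⟩, if_neg ?hna]
    · norm_num
    · intro ha
      have h := ha.2.2.2
      rw [r4] at h
      exact hne4 h.symm
  · rw [if_neg (not_rep_of_tr hTr), if_neg (not_att_of_tr hTr)]
    obtain ⟨t1, t2⟩ := hTr
    have e4 : (if A N = N then (-1:ℤ) else 1) =
        - (if A (N.1 - 1, N.2 - 1) = N then (-1:ℤ) else 1) := by
      by_cases hx : A (N.1 - 1, N.2 - 1) = N
      · rw [if_pos hx, if_neg (show ¬ (A N = N) by
          rw [t1.mp hx]; exact Ne.symm hne4)]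
        norm_num
      · have hx4 : A N = N := by
          rcases hA4 with h | h
          · exact h
          · exact absurd (t1.mpr h) hx
        rw [if_neg hx, if_pos hx4]
    have e3 : (if A (N.1 - 1, N.2) = N then (-1:ℤ) else 1) =
        - (if A (N.1, N.2 - 1) = N then (-1:ℤ) else 1) := by
      by_cases hy : A (N.1, N.2 - 1) = N
      · rw [if_pos hy, if_neg (show ¬ (A (N.1 - 1, N.2) = N) by
          rw [t2.mp hy]; exact Ne.symm hne3)]
        norm_num
      · have hy3 : A (N.1 - 1, N.2) = N := by
          rcases hA3 with h | h
          · exact h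
          · exact absurd (t2.mpr h) hy
        rw [if_neg hy, if_pos hy3]
    rw [e4, e3]
    ring

/-- the contribution of cell `c` to the total flux. -/
def vl (n : ℕ) (A : ℤ × ℤ → ℤ × ℤ) (c : ℤ × ℤ) : ℤ :=
  (if InteriorNode n (tl n A c) then 1 else 0) - (if InteriorNode n (A c) then 1 else 0)

lemma vl_inner {n : ℕ} {A : ℤ × ℤ → ℤ × ℤ} (hA : IsArrowField n A) {c : ℤ × ℤ}
    (h : aztecCell n c) : vl n A c = 0 := by
  have hc : aztecCell (n+1) c := by unfold aztecCell at *; push_cast at *; omega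
  obtain ⟨i1, i2⟩ := diag_interior h
  unfold vl tl
  rcases hA.1 c hc with h' | h'
  · rw [if_pos h', if_pos i2, if_pos (show InteriorNode n (A c) by rw [h']; exact i1)]
    ring
  · rw [if_neg (show ¬ (A c = (cellDiag n c).1) by rw [h']; exact Ne.symm diag_ne),
      if_pos i1, if_pos (show InteriorNode n (A c) by rw [h']; exact i2)]
    ring

lemma vl_bd {n : ℕ} (hn : 1 ≤ n) {A : ℤ × ℤ → ℤ × ℤ} (hA : IsArrowField n A)
    {c : ℤ × ℤ} (hb : aztecCell (n+1) c) (hnb : ¬ aztecCell n c)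
    (hout : ¬ aztecPoint n (A c)) : vl n A c = 1 := by
  have hAn : ¬ InteriorNode n (A c) := fun h => hout h.2
  unfold vl tl
  rcases bd_corner hn hb hnb with hi | hi
  · have hne : A c ≠ (cellDiag n c).1 := fun h => hAn (by rw [h]; exact hi)
    rw [if_neg hne, if_pos hi, if_neg hAn]
    ring
  · have h1 : A c = (cellDiag n c).1 := by
      rcases hA.1 c hb with h | h
      · exact h
      · exact absurd (show InteriorNode n (A c) by rw [h]; exact hi) hAn
    rw [if_pos h1, if_pos hi, if_neg hAn]
    ring

lemma sum_vl {n : ℕ} (hn : 1 ≤ n) {A : ℤ × ℤ → ℤ × ℤ} (hA : IsArrowField n A)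
    (hout : Outward n A) :
    ∑ c ∈ CF n, vl n A c =
      (((CF n).filter (fun c => ¬ aztecCell n c)).card : ℤ) := by
  rw [← Finset.sum_filter_add_sum_filter_not (CF n) (fun c => aztecCell n c)]
  have h1 : ∑ c ∈ (CF n).filter (fun c => aztecCell n c), vl n A c = 0 :=
    Finset.sum_eq_zero fun c hc => vl_inner hA (Finset.mem_filter.1 hc).2
  have h2 : ∑ c ∈ (CF n).filter (fun c => ¬ aztecCell n c), vl n A c =
      (((CF n).filter (fun c => ¬ aztecCell n c)).card : ℤ) := by
    rw [Finset.sum_congr rfl fun c hc => ?_, Finset.sum_const, nsmul_eq_mul, mul_one]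
    obtain ⟨hc1, hc2⟩ := Finset.mem_filter.1 hc
    exact vl_bd hn hA (mem_CF.1 hc1) hc2 (hout c ⟨mem_CF.1 hc1, hc2⟩)
  rw [h1, h2, zero_add]

set_option maxHeartbeats 1000000 in
lemma card_bd (n : ℕ) :
    ((CF n).filter (fun c => ¬ aztecCell n c)).card = 4 * (n + 1) := by
  have himg : (CF n).filter (fun c => ¬ aztecCell n c) =
      (Finset.range (n+1) ×ˢ (Finset.range 2 ×ˢ Finset.range 2)).image
        (fun x : ℕ × ℕ × ℕ =>
          ((if x.2.1 = 0 then (x.1 : ℤ) else -(x.1:ℤ) - 1),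
           (if x.2.2 = 0 then (n:ℤ) - x.1 else -((n:ℤ) - x.1) - 1))) := by
    ext c
    simp only [Finset.mem_filter, Finset.mem_image, Finset.mem_product, Finset.mem_range]
    constructor
    · rintro ⟨hc, hnc⟩
      have hcell := mem_CF.1 hc
      unfold aztecCell at hcell hnc
      obtain ⟨k, hk⟩ : ∃ k : ℕ, (k : ℤ) = max c.1 (-c.1 - 1) :=
        ⟨_, Int.toNat_of_nonneg (by omega)⟩
      refine ⟨(k, (if 0 ≤ c.1 then 0 else 1), (if 0 ≤ c.2 then 0 else 1)),
        ⟨?_, ?_, ?_⟩, ?_⟩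
      · omega
      · dsimp only; split_ifs <;> omega
      · dsimp only; split_ifs <;> omega
      · simp only [Prod.ext_iff]
        constructor <;> split_ifs <;> first | omega | exact ‹False›.elim
    · rintro ⟨x, hx, rfl⟩
      obtain ⟨hx1, hx2, hx3⟩ := hx
      constructor
      · apply mem_CF.2
        unfold aztecCell
        dsimp only
        split_ifs <;> omega
      · unfold aztecCell
        dsimp only
        split_ifs <;> omega
  have hinj : Set.InjOn
      (fun x : ℕ × ℕ × ℕ =>
          ((if x.2.1 = 0 then (x.1 : ℤ) else -(x.1:ℤ) - 1),
           (if x.2.2 = 0 then (n:ℤ) - x.1 else -((n:ℤ) - x.1) - 1)))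
      ((Finset.range (n+1) ×ˢ (Finset.range 2 ×ˢ Finset.range 2)) : Finset (ℕ × ℕ × ℕ)) := by
    intro x hx y hy hxy
    simp only [Finset.coe_product, Set.mem_prod, Finset.mem_coe, Finset.mem_range] at hx hy
    obtain ⟨a, b, c⟩ := x
    obtain ⟨a', b', c'⟩ := y
    simp only [Prod.ext_iff] at hxy ⊢
    dsimp only at hxy hx hy
    split_ifs at hxy <;> omega
  rw [himg, Finset.card_image_of_injOn hinj, Finset.card_product, Finset.card_product,
    Finset.card_range, Finset.card_range]
  ring

/-- For any outward pointing field of arrows on `A_{n+1}`, the number of repelling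
interior nodes exceeds the number of attracting interior nodes by exactly `n+1`. -/
theorem repelling_minus_attracting (n : ℕ) (hn : 1 ≤ n) (A : ℤ × ℤ → ℤ × ℤ)
    (hA : IsArrowField n A) (hout : Outward n A) :
    Set.ncard {N : ℤ × ℤ | InteriorNode n N ∧ Repelling A N} =
      Set.ncard {N : ℤ × ℤ | InteriorNode n N ∧ Attracting A N} + (n + 1) := by
  have hval : ∀ c ∈ CF n, vl n A c = ∑ N ∈ IF n, trm n A N c := by
    intro c _
    unfold vl trm
    rw [Finset.sum_sub_distrib,
      Finset.sum_ite_eq (IF n) (tl n A c) (fun _ => (1:ℤ)),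
      Finset.sum_ite_eq (IF n) (A c) (fun _ => (1:ℤ))]
    simp only [mem_IF]
  have key : (((CF n).filter (fun c => ¬ aztecCell n c)).card : ℤ)
      = 4 * (((IF n).filter (fun N => Repelling A N)).card : ℤ)
        - 4 * (((IF n).filter (fun N => Attracting A N)).card : ℤ) := by
    rw [← sum_vl hn hA hout, Finset.sum_congr rfl hval, Finset.sum_comm,
      Finset.sum_congr rfl (fun N hN => sum_trm hA (mem_IF.1 hN)),
      Finset.sum_sub_distrib, ← Finset.sum_filter, ← Finset.sum_filter,
      Finset.sum_const, Finset.sum_const]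
    push_cast
    ring
  rw [card_bd n] at key
  have hR : {N : ℤ × ℤ | InteriorNode n N ∧ Repelling A N}
      = ↑((IF n).filter (fun N => Repelling A N)) := by
    ext N
    simp only [Set.mem_setOf_eq, Finset.coe_filter, mem_IF]
  have hAt : {N : ℤ × ℤ | InteriorNode n N ∧ Attracting A N}
      = ↑((IF n).filter (fun N => Attracting A N)) := by
    ext N
    simp only [Set.mem_setOf_eq, Finset.coe_filter, mem_IF]
  rw [hR, hAt, Set.ncard_coe_finset, Set.ncard_coe_finset]
  push_cast at key
  omega
end

section
/- Given an inward pointing field of arrows F on A_{n+1} with r(F) repelling nodes, there are exactly 2^{r(F)} domino tilings T of A_n whose associated field of arrows equals F. -/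
/-- The field of arrows on `A_{n+1}` associated to a tiling of `A_n`: on squares of
`A_n` as for tilings, and inward pointing arrows in all boundary squares. -/
def tilingArrowInner (n : ℕ) (t : ℤ × ℤ → ℤ × ℤ) (c : ℤ × ℤ) : ℤ × ℤ :=
  if aztecCell n c then tilingArrow n t c
  else if aztecPoint n (cellDiag n c).1 then (cellDiag n c).1 else (cellDiag n c).2

section AuxDev

open scoped Classical

/-- The opposite corner of `M` in the unit square `c`. -/
def oppC (M c : ℤ × ℤ) : ℤ × ℤ := (2*c.1+1-M.1, 2*c.2+1-M.2)

/-- The tail node of the arrow in square `c`. -/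
noncomputable def tailOf (n : ℕ) (A : ℤ × ℤ → ℤ × ℤ) (c : ℤ × ℤ) : ℤ × ℤ :=
  if A c = (cellDiag n c).1 then (cellDiag n c).2 else (cellDiag n c).1

def hNbr (M c : ℤ × ℤ) : ℤ × ℤ := (2*M.1 - 1 - c.1, c.2)
def vNbr (M c : ℤ × ℤ) : ℤ × ℤ := (c.1, 2*M.2 - 1 - c.2)

lemma oppC_ne (M c : ℤ × ℤ) : oppC M c ≠ M := by
  obtain ⟨m1,m2⟩ := M; obtain ⟨c1,c2⟩ := c
  unfold oppC; dsimp; simp only [Prod.mk.injEq, not_and]; intro h; omega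

lemma aztecCell_mono {n : ℕ} {c : ℤ × ℤ} (h : aztecCell n c) : aztecCell (n+1) c := by
  unfold aztecCell at *; push_cast; omega

lemma corner_point {n : ℕ} {c p : ℤ × ℤ} (hc : aztecCell n c)
    (h1 : p.1 = c.1 ∨ p.1 = c.1 + 1) (h2 : p.2 = c.2 ∨ p.2 = c.2 + 1) :
    aztecPoint n p := by
  obtain ⟨c1,c2⟩ := c; obtain ⟨p1,p2⟩ := p
  unfold aztecCell at hc; unfold aztecPoint
  simp only [abs_eq_max_neg] at *
  try dsimp at *
  omega

lemma cellDiag_corner₁ (n : ℕ) (c : ℤ × ℤ) :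
    ((cellDiag n c).1.1 = c.1 ∨ (cellDiag n c).1.1 = c.1 + 1) ∧
    ((cellDiag n c).1.2 = c.2 ∨ (cellDiag n c).1.2 = c.2 + 1) ∧
    ((cellDiag n c).1.1 + (cellDiag n c).1.2 - (n:ℤ)) % 2 = 0 := by
  obtain ⟨c1,c2⟩ := c; unfold cellDiag; dsimp
  split_ifs with h <;> dsimp <;> omega

lemma cellDiag_corner₂ (n : ℕ) (c : ℤ × ℤ) :
    ((cellDiag n c).2.1 = c.1 ∨ (cellDiag n c).2.1 = c.1 + 1) ∧
    ((cellDiag n c).2.2 = c.2 ∨ (cellDiag n c).2.2 = c.2 + 1) ∧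
    ((cellDiag n c).2.1 + (cellDiag n c).2.2 - (n:ℤ)) % 2 = 0 := by
  obtain ⟨c1,c2⟩ := c; unfold cellDiag; dsimp
  split_ifs with h <;> dsimp <;> omega

lemma cellDiag_ne (n : ℕ) (c : ℤ × ℤ) : (cellDiag n c).1 ≠ (cellDiag n c).2 := by
  obtain ⟨c1,c2⟩ := c; unfold cellDiag; dsimp
  split_ifs with h <;> simp only [Prod.mk.injEq, not_and] <;> intro h' <;> omega

lemma diag_eq_of_corner {n : ℕ} {c M : ℤ × ℤ}
    (h1 : M.1 = c.1 ∨ M.1 = c.1 + 1) (h2 : M.2 = c.2 ∨ M.2 = c.2 + 1)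
    (hpar : (M.1 + M.2 - (n:ℤ)) % 2 = 0) :
    (M = (cellDiag n c).1 ∧ (cellDiag n c).2 = oppC M c) ∨
    (M = (cellDiag n c).2 ∧ (cellDiag n c).1 = oppC M c) := by
  obtain ⟨c1,c2⟩ := c; obtain ⟨m1,m2⟩ := M
  unfold cellDiag oppC; dsimp at *
  split_ifs with h <;> simp only [Prod.mk.injEq] <;> omega

end AuxDev
section AuxDev2

lemma arrow_dichotomy {n : ℕ} {A : ℤ × ℤ → ℤ × ℤ} (hA : IsArrowField n A) {c M : ℤ × ℤ}
    (hc : aztecCell (n+1) c)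
    (h1 : M.1 = c.1 ∨ M.1 = c.1 + 1) (h2 : M.2 = c.2 ∨ M.2 = c.2 + 1)
    (hpar : (M.1 + M.2 - (n:ℤ)) % 2 = 0) :
    (A c = M ∧ tailOf n A c = oppC M c) ∨ (A c = oppC M c ∧ tailOf n A c = M) := by
  have hd := diag_eq_of_corner (n := n) (c := c) h1 h2 hpar
  have ha := hA.1 c hc
  have hne := cellDiag_ne n c
  unfold tailOf
  rcases hd with ⟨e1, e2⟩ | ⟨e1, e2⟩ <;> rcases ha with h | h <;>
    rw [h] <;> simp only [← e1, ← e2] at * <;> simp_all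

lemma tail_iff {n : ℕ} {A : ℤ × ℤ → ℤ × ℤ} (hA : IsArrowField n A) {c M : ℤ × ℤ}
    (hc : aztecCell (n+1) c)
    (h1 : M.1 = c.1 ∨ M.1 = c.1 + 1) (h2 : M.2 = c.2 ∨ M.2 = c.2 + 1)
    (hpar : (M.1 + M.2 - (n:ℤ)) % 2 = 0) :
    (tailOf n A c = M ↔ A c = oppC M c) ∧ (¬ tailOf n A c = M ↔ A c = M) := by
  have hne := oppC_ne M c
  rcases arrow_dichotomy hA hc h1 h2 hpar with ⟨h, h'⟩ | ⟨h, h'⟩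
  · constructor
    · constructor
      · intro ht; rw [h'] at ht; exact absurd ht hne
      · intro ha; rw [h] at ha; exact absurd ha.symm hne
    · simp [h, h', hne]
  · simp [h, h', hne]

/-- All four cells around an interior node lie in `A_{n+1}`. -/
lemma cells_around {n : ℕ} {M : ℤ × ℤ} (hM : InteriorNode n M) {c : ℤ × ℤ}
    (h1 : c.1 = M.1 - 1 ∨ c.1 = M.1) (h2 : c.2 = M.2 - 1 ∨ c.2 = M.2) :
    aztecCell (n+1) c := by
  obtain ⟨⟨hp, hpar⟩, hint⟩ := hM
  obtain ⟨m1,m2⟩ := M; obtain ⟨c1,c2⟩ := c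
  unfold aztecPoint at hp hint; unfold aztecCell
  simp only [abs_eq_max_neg] at *
  push_cast at *
  try dsimp at *
  omega

/-- A boundary cell has at most one interior diag corner. -/
lemma boundary_unique {n : ℕ} {c : ℤ × ℤ} (hb : aztecCell (n+1) c) (hnb : ¬ aztecCell n c) :
    ¬ (aztecPoint n (cellDiag n c).1 ∧ aztecPoint n (cellDiag n c).2) := by
  obtain ⟨c1,c2⟩ := c
  unfold aztecCell at hb hnb; unfold cellDiag; dsimp at *
  split_ifs with h <;> unfold aztecPoint <;>
    simp only [abs_eq_max_neg] <;> push_cast at * <;> omega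

/-- Boundary cells point at any interior node corner (under `Inward`). -/
lemma boundary_arrow {n : ℕ} {A : ℤ × ℤ → ℤ × ℤ} (hA : IsArrowField n A) (hin : Inward n A)
    {c M : ℤ × ℤ} (hb : aztecCell (n+1) c) (hnb : ¬ aztecCell n c)
    (hM : aztecPoint n M)
    (h1 : M.1 = c.1 ∨ M.1 = c.1 + 1) (h2 : M.2 = c.2 ∨ M.2 = c.2 + 1)
    (hpar : (M.1 + M.2 - (n:ℤ)) % 2 = 0) :
    A c = M := by
  rcases arrow_dichotomy hA hb h1 h2 hpar with ⟨h, _⟩ | ⟨h, _⟩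
  · exact h
  · exfalso
    have hia : aztecPoint n (A c) := hin c ⟨hb, hnb⟩
    have hd := diag_eq_of_corner (n := n) (c := c) h1 h2 hpar
    refine boundary_unique hb hnb ?_
    rcases hd with ⟨e1, e2⟩ | ⟨e1, e2⟩
    · exact ⟨e1 ▸ hM, by rw [e2, ← h]; exact hia⟩
    · exact ⟨by rw [e2, ← h]; exact hia, e1 ▸ hM⟩

/-- Data of the tail node of a cell in `A_n`. -/
lemma tail_spec {n : ℕ} {A : ℤ × ℤ → ℤ × ℤ} (hA : IsArrowField n A) {c : ℤ × ℤ}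
    (hc : aztecCell n c) :
    ((tailOf n A c).1 = c.1 ∨ (tailOf n A c).1 = c.1 + 1) ∧
    ((tailOf n A c).2 = c.2 ∨ (tailOf n A c).2 = c.2 + 1) ∧
    InteriorNode n (tailOf n A c) ∧ A c = oppC (tailOf n A c) c := by
  have hco : ((tailOf n A c).1 = c.1 ∨ (tailOf n A c).1 = c.1 + 1) ∧
      ((tailOf n A c).2 = c.2 ∨ (tailOf n A c).2 = c.2 + 1) ∧
      ((tailOf n A c).1 + (tailOf n A c).2 - (n:ℤ)) % 2 = 0 := by
    unfold tailOf; split_ifs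
    · exact cellDiag_corner₂ n c
    · exact cellDiag_corner₁ n c
  obtain ⟨h1, h2, hpar⟩ := hco
  have hpt : aztecPoint n (tailOf n A c) := corner_point hc h1 h2
  refine ⟨h1, h2, ⟨⟨?_, hpar⟩, hpt⟩, ?_⟩
  · -- aztecPoint (n+1)
    unfold aztecPoint at hpt ⊢; push_cast; omega
  · rcases arrow_dichotomy hA (aztecCell_mono hc) h1 h2 hpar with ⟨h, h'⟩ | ⟨h, _⟩
    · exact absurd h'.symm (oppC_ne _ _)
    · exact h

end AuxDev2
section AuxDev3

lemma tail_iff' {n : ℕ} {A : ℤ × ℤ → ℤ × ℤ} (hA : IsArrowField n A) {M : ℤ × ℤ}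
    (hM : InteriorNode n M) {u p : ℤ × ℤ}
    (h1 : u.1 = M.1 - 1 ∨ u.1 = M.1) (h2 : u.2 = M.2 - 1 ∨ u.2 = M.2)
    (hp : p = oppC M u) :
    (tailOf n A u = M ↔ A u = p) ∧ (¬ tailOf n A u = M ↔ A u = M) := by
  subst hp
  exact tail_iff hA (cells_around hM h1 h2) (by omega) (by omega) hM.1.2

lemma partner_in {n : ℕ} {A : ℤ × ℤ → ℤ × ℤ} (hA : IsArrowField n A) (hin : Inward n A)
    {M d : ℤ × ℤ} (hM : InteriorNode n M)
    (h1 : d.1 = M.1 - 1 ∨ d.1 = M.1) (h2 : d.2 = M.2 - 1 ∨ d.2 = M.2)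
    (ht : tailOf n A d = M) : aztecCell n d := by
  by_contra hnb
  have hb := cells_around hM h1 h2
  have h1' : M.1 = d.1 ∨ M.1 = d.1 + 1 := by omega
  have h2' : M.2 = d.2 ∨ M.2 = d.2 + 1 := by omega
  have ha := boundary_arrow hA hin hb hnb hM.2 h1' h2' hM.1.2
  exact ((tail_iff hA hb h1' h2' hM.1.2).2.mpr ha) ht

lemma repelling_away {A : ℤ × ℤ → ℤ × ℤ} {M : ℤ × ℤ} (hr : Repelling A M) {d : ℤ × ℤ}
    (h1 : d.1 = M.1 - 1 ∨ d.1 = M.1) (h2 : d.2 = M.2 - 1 ∨ d.2 = M.2) :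
    A d = oppC M d := by
  obtain ⟨m1,m2⟩ := M; obtain ⟨x,y⟩ := d
  obtain ⟨r1,r2,r3,r4⟩ := hr
  dsimp at *
  unfold oppC; dsimp
  rcases h1 with h1 | h1 <;> rcases h2 with h2 | h2 <;> subst h1 <;> subst h2 <;>
    simp only [r1, r2, r3, r4, Prod.mk.injEq] <;> omega

/-- At a repelling interior node, all four surrounding cells are in `A_n` and have tail `M`. -/
lemma repelling_cells {n : ℕ} {A : ℤ × ℤ → ℤ × ℤ} (hA : IsArrowField n A) (hin : Inward n A)
    {M : ℤ × ℤ} (hM : InteriorNode n M) (hr : Repelling A M) {d : ℤ × ℤ}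
    (h1 : d.1 = M.1 - 1 ∨ d.1 = M.1) (h2 : d.2 = M.2 - 1 ∨ d.2 = M.2) :
    aztecCell n d ∧ tailOf n A d = M := by
  have haw := repelling_away hr h1 h2
  have ht : tailOf n A d = M := (tail_iff' hA hM h1 h2 rfl).1.mpr haw
  exact ⟨partner_in hA hin hM h1 h2 ht, ht⟩

lemma transient_xor {n : ℕ} {A : ℤ × ℤ → ℤ × ℤ} (hA : IsArrowField n A) {M : ℤ × ℤ}
    (hM : InteriorNode n M) (htr : Transient A M) {c : ℤ × ℤ}
    (h1 : c.1 = M.1 - 1 ∨ c.1 = M.1) (h2 : c.2 = M.2 - 1 ∨ c.2 = M.2)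
    (hct : tailOf n A c = M) :
    (tailOf n A (hNbr M c) = M ↔ ¬ tailOf n A (vNbr M c) = M) ∧
    ¬ tailOf n A (hNbr M (vNbr M c)) = M := by
  obtain ⟨m1, m2⟩ := M
  obtain ⟨t1, t2⟩ := htr
  have iSW := tail_iff' (u := (m1-1, m2-1)) (p := (m1-1, m2-1)) hA hM (by dsimp; omega)
    (by dsimp; omega) (by unfold oppC; dsimp; simp only [Prod.mk.injEq]; omega)
  have iSE := tail_iff' (u := (m1, m2-1)) (p := (m1+1, m2-1)) hA hM (by dsimp; omega)
    (by dsimp; omega) (by unfold oppC; dsimp; simp only [Prod.mk.injEq]; omega)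
  have iNW := tail_iff' (u := (m1-1, m2)) (p := (m1-1, m2+1)) hA hM (by dsimp; omega)
    (by dsimp; omega) (by unfold oppC; dsimp; simp only [Prod.mk.injEq]; omega)
  have iNE := tail_iff' (u := (m1, m2)) (p := (m1+1, m2+1)) hA hM (by dsimp; omega)
    (by dsimp; omega) (by unfold oppC; dsimp; simp only [Prod.mk.injEq]; omega)
  dsimp at h1 h2 t1 t2
  obtain ⟨iSW1, iSW2⟩ := iSW; obtain ⟨iSE1, iSE2⟩ := iSE
  obtain ⟨iNW1, iNW2⟩ := iNW; obtain ⟨iNE1, iNE2⟩ := iNE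
  have cSW : A (m1-1, m2-1) = (m1, m2) → A (m1-1, m2-1) = (m1-1, m2-1) → False := by
    intro p q; rw [p] at q; simp only [Prod.mk.injEq] at q; omega
  have cSE : A (m1, m2-1) = (m1, m2) → A (m1, m2-1) = (m1+1, m2-1) → False := by
    intro p q; rw [p] at q; simp only [Prod.mk.injEq] at q; omega
  have cNW : A (m1-1, m2) = (m1, m2) → A (m1-1, m2) = (m1-1, m2+1) → False := by
    intro p q; rw [p] at q; simp only [Prod.mk.injEq] at q; omega
  have cNE : A (m1, m2) = (m1, m2) → A (m1, m2) = (m1+1, m2+1) → False := by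
    intro p q; rw [p] at q; simp only [Prod.mk.injEq] at q; omega
  rcases h1 with h1 | h1 <;> rcases h2 with h2 | h2
  · -- c = SW
    obtain rfl : c = (m1-1, m2-1) := Prod.ext_iff.mpr ⟨h1, h2⟩
    have eh : hNbr ((m1:ℤ), (m2:ℤ)) (m1-1, m2-1) = (m1, m2-1) := by
      unfold hNbr; dsimp only; simp only [Prod.mk.injEq, and_true, true_and]; omega
    have ev : vNbr ((m1:ℤ), (m2:ℤ)) (m1-1, m2-1) = (m1-1, m2) := by
      unfold vNbr; dsimp only; simp only [Prod.mk.injEq, and_true, true_and]; omega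
    have ew : hNbr ((m1:ℤ), (m2:ℤ)) (m1-1, m2) = (m1, m2) := by
      unfold hNbr; dsimp only; simp only [Prod.mk.injEq, and_true, true_and]; omega
    rw [eh, ev, ew]
    refine ⟨⟨fun hSE hNW => ?_, fun hnNW => ?_⟩, fun hNE => ?_⟩
    · exact (iSE2.mpr (t2.mpr (iNW1.mp hNW))) hSE
    · have hANW := iNW2.mp hnNW
      have hnASE : ¬ A (m1, m2-1) = (m1, m2) := fun hx => cNW hANW (t2.mp hx)
      exact not_not.mp (fun hx => hnASE (iSE2.mp hx))
    · exact (iSW2.mpr (t1.mpr (iNE1.mp hNE))) hct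
  · -- c = NW
    obtain rfl : c = (m1-1, m2) := Prod.ext_iff.mpr ⟨h1, h2⟩
    have eh : hNbr ((m1:ℤ), (m2:ℤ)) (m1-1, m2) = (m1, m2) := by
      unfold hNbr; dsimp only; simp only [Prod.mk.injEq, and_true, true_and]; omega
    have ev : vNbr ((m1:ℤ), (m2:ℤ)) (m1-1, m2) = (m1-1, m2-1) := by
      unfold vNbr; dsimp only; simp only [Prod.mk.injEq, and_true, true_and]; omega
    have ew : hNbr ((m1:ℤ), (m2:ℤ)) (m1-1, m2-1) = (m1, m2-1) := by
      unfold hNbr; dsimp only; simp only [Prod.mk.injEq, and_true, true_and]; omega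
    rw [eh, ev, ew]
    refine ⟨⟨fun hNE hSW => ?_, fun hnSW => ?_⟩, ?_⟩
    · exact (iSW2.mpr (t1.mpr (iNE1.mp hNE))) hSW
    · exact iNE1.mpr (t1.mp (iSW2.mp hnSW))
    · exact iSE2.mpr (t2.mpr (iNW1.mp hct))
  · -- c = SE
    obtain rfl : c = (m1, m2-1) := Prod.ext_iff.mpr ⟨h1, h2⟩
    have eh : hNbr ((m1:ℤ), (m2:ℤ)) (m1, m2-1) = (m1-1, m2-1) := by
      unfold hNbr; dsimp only; simp only [Prod.mk.injEq, and_true, true_and]; omega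
    have ev : vNbr ((m1:ℤ), (m2:ℤ)) (m1, m2-1) = (m1, m2) := by
      unfold vNbr; dsimp only; simp only [Prod.mk.injEq, and_true, true_and]; omega
    have ew : hNbr ((m1:ℤ), (m2:ℤ)) (m1, m2) = (m1-1, m2) := by
      unfold hNbr; dsimp only; simp only [Prod.mk.injEq, and_true, true_and]; omega
    rw [eh, ev, ew]
    have hASE := iSE1.mp hct
    refine ⟨⟨fun hSW hNE => ?_, fun hnNE => ?_⟩, fun hNW => ?_⟩
    · exact cSW (t1.mpr (iNE1.mp hNE)) (iSW1.mp hSW)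
    · have hANE := iNE2.mp hnNE
      have hnASW : ¬ A (m1-1, m2-1) = (m1, m2) := fun hx => cNE hANE (t1.mp hx)
      exact not_not.mp (fun hx => hnASW (iSW2.mp hx))
    · exact cSE (t2.mpr (iNW1.mp hNW)) hASE
  · -- c = NE
    obtain rfl : c = (m1, m2) := Prod.ext_iff.mpr ⟨h1, h2⟩
    have eh : hNbr ((m1:ℤ), (m2:ℤ)) (m1, m2) = (m1-1, m2) := by
      unfold hNbr; dsimp only; simp only [Prod.mk.injEq, and_true, true_and]; omega
    have ev : vNbr ((m1:ℤ), (m2:ℤ)) (m1, m2) = (m1, m2-1) := by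
      unfold vNbr; dsimp only; simp only [Prod.mk.injEq, and_true, true_and]; omega
    have ew : hNbr ((m1:ℤ), (m2:ℤ)) (m1, m2-1) = (m1-1, m2-1) := by
      unfold hNbr; dsimp only; simp only [Prod.mk.injEq, and_true, true_and]; omega
    rw [eh, ev, ew]
    refine ⟨⟨fun hNW => iSE2.mpr (t2.mpr (iNW1.mp hNW)), fun hnSE =>
      iNW1.mpr (t2.mp (iSE2.mp hnSE))⟩, iSW2.mpr (t1.mpr (iNE1.mp hct))⟩

end AuxDev3
section AuxDev4

open scoped Classical in
noncomputable def buildT (n : ℕ) (A : ℤ × ℤ → ℤ × ℤ) (f : ℤ × ℤ → Bool) (c : ℤ × ℤ) : ℤ × ℤ :=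
  if aztecCell n c then
    if Repelling A (tailOf n A c) then
      if f (tailOf n A c) then hNbr (tailOf n A c) c else vNbr (tailOf n A c) c
    else if tailOf n A (hNbr (tailOf n A c) c) = tailOf n A c then hNbr (tailOf n A c) c
    else vNbr (tailOf n A c) c
  else c

lemma buildT_of_rep {n : ℕ} {A : ℤ × ℤ → ℤ × ℤ} {f : ℤ × ℤ → Bool} {c : ℤ × ℤ}
    (hc : aztecCell n c) (hrep : Repelling A (tailOf n A c)) :
    buildT n A f c =
      if f (tailOf n A c) then hNbr (tailOf n A c) c else vNbr (tailOf n A c) c := by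
  unfold buildT; rw [if_pos hc, if_pos hrep]

lemma buildT_of_trans {n : ℕ} {A : ℤ × ℤ → ℤ × ℤ} {f : ℤ × ℤ → Bool} {c : ℤ × ℤ}
    (hc : aztecCell n c) (hnrep : ¬ Repelling A (tailOf n A c)) :
    buildT n A f c =
      if tailOf n A (hNbr (tailOf n A c) c) = tailOf n A c then hNbr (tailOf n A c) c
      else vNbr (tailOf n A c) c := by
  unfold buildT; rw [if_pos hc, if_neg hnrep]

lemma buildT_out {n : ℕ} {A : ℤ × ℤ → ℤ × ℤ} {f : ℤ × ℤ → Bool} {c : ℤ × ℤ}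
    (hc : ¬ aztecCell n c) : buildT n A f c = c := by
  unfold buildT; rw [if_neg hc]

lemma hNbr_pos {M c : ℤ × ℤ} (p1 : c.1 = M.1 - 1 ∨ c.1 = M.1)
    (p2 : c.2 = M.2 - 1 ∨ c.2 = M.2) :
    ((hNbr M c).1 = M.1 - 1 ∨ (hNbr M c).1 = M.1) ∧
    ((hNbr M c).2 = M.2 - 1 ∨ (hNbr M c).2 = M.2) := by
  unfold hNbr; dsimp; omega

lemma vNbr_pos {M c : ℤ × ℤ} (p1 : c.1 = M.1 - 1 ∨ c.1 = M.1)
    (p2 : c.2 = M.2 - 1 ∨ c.2 = M.2) :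
    ((vNbr M c).1 = M.1 - 1 ∨ (vNbr M c).1 = M.1) ∧
    ((vNbr M c).2 = M.2 - 1 ∨ (vNbr M c).2 = M.2) := by
  unfold vNbr; dsimp; omega

lemma hNbr_hNbr (M c : ℤ × ℤ) : hNbr M (hNbr M c) = c := by
  unfold hNbr; dsimp; exact Prod.ext_iff.mpr ⟨by ring, rfl⟩

lemma vNbr_vNbr (M c : ℤ × ℤ) : vNbr M (vNbr M c) = c := by
  unfold vNbr; dsimp; exact Prod.ext_iff.mpr ⟨rfl, by ring⟩

lemma adj_hNbr {M c : ℤ × ℤ} (p1 : c.1 = M.1 - 1 ∨ c.1 = M.1) : Adjacent c (hNbr M c) := by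
  unfold Adjacent hNbr; dsimp
  right; refine ⟨rfl, ?_⟩
  rw [abs_eq_max_neg]; omega

lemma adj_vNbr {M c : ℤ × ℤ} (p2 : c.2 = M.2 - 1 ∨ c.2 = M.2) : Adjacent c (vNbr M c) := by
  unfold Adjacent vNbr; dsimp
  left; refine ⟨rfl, ?_⟩
  rw [abs_eq_max_neg]; omega

lemma attracting_toward {A : ℤ × ℤ → ℤ × ℤ} {M : ℤ × ℤ} (hatt : Attracting A M) {d : ℤ × ℤ}
    (h1 : d.1 = M.1 - 1 ∨ d.1 = M.1) (h2 : d.2 = M.2 - 1 ∨ d.2 = M.2) : A d = M := by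
  obtain ⟨m1, m2⟩ := M
  obtain ⟨a1, a2, a3, a4⟩ := hatt
  dsimp at *
  rcases h1 with h1 | h1 <;> rcases h2 with h2 | h2
  · rw [show d = (m1-1, m2-1) from Prod.ext_iff.mpr ⟨h1, h2⟩]; exact a1
  · rw [show d = (m1-1, m2) from Prod.ext_iff.mpr ⟨h1, h2⟩]; exact a3
  · rw [show d = (m1, m2-1) from Prod.ext_iff.mpr ⟨h1, h2⟩]; exact a2
  · rw [show d = (m1, m2) from Prod.ext_iff.mpr ⟨h1, h2⟩]; exact a4

lemma rep_not_trans {A : ℤ × ℤ → ℤ × ℤ} {M : ℤ × ℤ} (hr : Repelling A M)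
    (ht : Transient A M) : False := by
  obtain ⟨m1, m2⟩ := M
  obtain ⟨r1, r2, r3, r4⟩ := hr; obtain ⟨t1, t2⟩ := ht
  dsimp at *
  have h := t1.mpr r4
  rw [r1] at h
  simp only [Prod.mk.injEq] at h; omega

lemma buildT_main {n : ℕ} {A : ℤ × ℤ → ℤ × ℤ} (hA : IsArrowField n A) (hin : Inward n A)
    (f : ℤ × ℤ → Bool) {c : ℤ × ℤ} (hc : aztecCell n c) :
    aztecCell n (buildT n A f c) ∧ Adjacent c (buildT n A f c) ∧
    tailOf n A (buildT n A f c) = tailOf n A c ∧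
    buildT n A f (buildT n A f c) = c := by
  obtain ⟨h1, h2, hMint, hAc⟩ := tail_spec hA hc
  set M := tailOf n A c with hM
  have p1 : c.1 = M.1 - 1 ∨ c.1 = M.1 := by omega
  have p2 : c.2 = M.2 - 1 ∨ c.2 = M.2 := by omega
  have hq1 := hNbr_pos p1 p2
  have hq2 := vNbr_pos p1 p2
  rcases hA.2 M hMint with hatt | hrep | htr
  · exact (((tail_iff' hA hMint p1 p2 rfl).2.mpr (attracting_toward hatt p1 p2)) hM.symm).elim
  · have hrep' : Repelling A (tailOf n A c) := by rw [← hM]; exact hrep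
    rw [buildT_of_rep hc hrep', ← hM]
    by_cases hf : f M
    · rw [if_pos hf]
      obtain ⟨hd, hdt⟩ := repelling_cells hA hin hMint hrep hq1.1 hq1.2
      refine ⟨hd, adj_hNbr p1, hdt, ?_⟩
      rw [buildT_of_rep hd (by rw [hdt]; exact hrep), hdt, if_pos hf, hNbr_hNbr]
    · rw [if_neg hf]
      obtain ⟨hd, hdt⟩ := repelling_cells hA hin hMint hrep hq2.1 hq2.2
      refine ⟨hd, adj_vNbr p2, hdt, ?_⟩
      rw [buildT_of_rep hd (by rw [hdt]; exact hrep), hdt, if_neg hf, vNbr_vNbr]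
  · have hnrep : ¬ Repelling A M := fun hr => rep_not_trans hr htr
    have hxor := transient_xor hA hMint htr p1 p2 hM.symm
    rw [buildT_of_trans hc (by rw [← hM]; exact hnrep), ← hM]
    by_cases hh : tailOf n A (hNbr M c) = M
    · rw [if_pos hh]
      have hd := partner_in hA hin hMint hq1.1 hq1.2 hh
      refine ⟨hd, adj_hNbr p1, hh, ?_⟩
      rw [buildT_of_trans hd (by rw [hh]; exact hnrep), hh, hNbr_hNbr, ← hM, if_pos rfl]
    · have hv : tailOf n A (vNbr M c) = M := by
        by_contra hvn; exact hh (hxor.1.mpr hvn)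
      rw [if_neg hh]
      have hd := partner_in hA hin hMint hq2.1 hq2.2 hv
      refine ⟨hd, adj_vNbr p2, hv, ?_⟩
      rw [buildT_of_trans hd (by rw [hv]; exact hnrep), hv, if_neg hxor.2, vNbr_vNbr]

end AuxDev4
section AuxDev5

lemma corner_M {M c : ℤ × ℤ} (p1 : c.1 = M.1 - 1 ∨ c.1 = M.1)
    (p2 : c.2 = M.2 - 1 ∨ c.2 = M.2) :
    SqCorner (hNbr M c) M ∧ SqCorner (vNbr M c) M := by
  unfold SqCorner hNbr vNbr; dsimp; omega

lemma not_corner_opp {M c : ℤ × ℤ} (p1 : c.1 = M.1 - 1 ∨ c.1 = M.1)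
    (p2 : c.2 = M.2 - 1 ∨ c.2 = M.2) :
    ¬ SqCorner (hNbr M c) (oppC M c) ∧ ¬ SqCorner (vNbr M c) (oppC M c) := by
  unfold SqCorner hNbr vNbr oppC; dsimp; omega

lemma buildT_arrow {n : ℕ} {A : ℤ × ℤ → ℤ × ℤ} (hA : IsArrowField n A) (hin : Inward n A)
    (f : ℤ × ℤ → Bool) {c : ℤ × ℤ} (hcc : aztecCell (n+1) c) :
    tilingArrowInner n (buildT n A f) c = A c := by
  by_cases hc : aztecCell n c
  · obtain ⟨h1, h2, hMint, hAc⟩ := tail_spec hA hc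
    set M := tailOf n A c with hM
    have p1 : c.1 = M.1 - 1 ∨ c.1 = M.1 := by omega
    have p2 : c.2 = M.2 - 1 ∨ c.2 = M.2 := by omega
    have hbc : buildT n A f c = hNbr M c ∨ buildT n A f c = vNbr M c := by
      unfold buildT; rw [if_pos hc, ← hM]; split_ifs <;> simp
    unfold tilingArrowInner; rw [if_pos hc]
    unfold tilingArrow
    have hd : (M = (cellDiag n c).1 ∧ (cellDiag n c).2 = oppC M c) ∨
        (M = (cellDiag n c).2 ∧ (cellDiag n c).1 = oppC M c) :=
      diag_eq_of_corner (by omega) (by omega) hMint.1.2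
    have hMc : SqCorner (buildT n A f c) M := by
      rcases hbc with h | h <;> rw [h]
      exacts [(corner_M p1 p2).1, (corner_M p1 p2).2]
    have hnc : ¬ SqCorner (buildT n A f c) (oppC M c) := by
      rcases hbc with h | h <;> rw [h]
      exacts [(not_corner_opp p1 p2).1, (not_corner_opp p1 p2).2]
    rcases hd with ⟨e1, e2⟩ | ⟨e1, e2⟩
    · rw [if_pos (by rw [← e1]; exact hMc), e2, hAc]
    · rw [if_neg (by rw [e2]; exact hnc), e2, hAc]
  · unfold tilingArrowInner; rw [if_neg hc]
    have hia : aztecPoint n (A c) := hin c ⟨hcc, hc⟩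
    have ha := hA.1 c hcc
    have hbu := boundary_unique hcc hc
    by_cases hpt : aztecPoint n (cellDiag n c).1
    · rw [if_pos hpt]
      rcases ha with h | h
      · exact h.symm
      · exact absurd ⟨hpt, h ▸ hia⟩ hbu
    · rw [if_neg hpt]
      rcases ha with h | h
      · exact absurd (h ▸ hia) hpt
      · exact h.symm

lemma buildT_P {n : ℕ} {A : ℤ × ℤ → ℤ × ℤ} (hA : IsArrowField n A) (hin : Inward n A)
    (f : ℤ × ℤ → Bool) :
    IsTiling n (buildT n A f) ∧
      ∀ c, aztecCell (n+1) c → tilingArrowInner n (buildT n A f) c = A c := by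
  refine ⟨⟨fun c hc => ?_, fun c hc => buildT_out hc⟩, fun c hc => buildT_arrow hA hin f hc⟩
  obtain ⟨ha, hb, _, hd⟩ := buildT_main hA hin f hc
  exact ⟨ha, hd, hb⟩

end AuxDev5
section AuxDev6

lemma shared_corner {n : ℕ} {c d : ℤ × ℤ} (hadj : Adjacent c d) :
    SqCorner d (cellDiag n c).1 ∨ SqCorner d (cellDiag n c).2 := by
  obtain ⟨q1a, q1b, q1p⟩ := cellDiag_corner₁ n c
  obtain ⟨q2a, q2b, q2p⟩ := cellDiag_corner₂ n c
  have hne : ¬((cellDiag n c).1.1 = (cellDiag n c).2.1 ∧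
      (cellDiag n c).1.2 = (cellDiag n c).2.2) :=
    fun h => cellDiag_ne n c (Prod.ext_iff.mpr h)
  unfold Adjacent at hadj; unfold SqCorner
  simp only [abs_eq_max_neg] at hadj
  omega

lemma tiling_partner {n : ℕ} {A t : ℤ × ℤ → ℤ × ℤ} (hA : IsArrowField n A)
    (ht : IsTiling n t) (harr : ∀ c, aztecCell (n+1) c → tilingArrowInner n t c = A c)
    {c : ℤ × ℤ} (hc : aztecCell n c) :
    SqCorner (t c) (tailOf n A c) := by
  obtain ⟨htc, hinv, hadj⟩ := ht.1 c hc
  have harr' : tilingArrow n t c = A c := by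
    have h := harr c (aztecCell_mono hc)
    unfold tilingArrowInner at h; rwa [if_pos hc] at h
  unfold tilingArrow at harr'
  unfold tailOf
  by_cases hs : SqCorner (t c) (cellDiag n c).1
  · rw [if_pos hs] at harr'
    rw [if_neg (fun h => cellDiag_ne n c (harr' ▸ h).symm)]
    exact hs
  · rw [if_neg hs] at harr'
    rw [if_pos harr'.symm]
    exact (shared_corner hadj).resolve_left hs

lemma tiling_cases {n : ℕ} {A t : ℤ × ℤ → ℤ × ℤ} (hA : IsArrowField n A)
    (ht : IsTiling n t) (harr : ∀ c, aztecCell (n+1) c → tilingArrowInner n t c = A c)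
    {c : ℤ × ℤ} (hc : aztecCell n c) :
    t c = hNbr (tailOf n A c) c ∨ t c = vNbr (tailOf n A c) c := by
  obtain ⟨htc, hinv, hadj⟩ := ht.1 c hc
  have hsq := tiling_partner hA ht harr hc
  obtain ⟨h1, h2, hMint, hAc⟩ := tail_spec hA hc
  set M := tailOf n A c with hM
  unfold Adjacent at hadj; unfold SqCorner at hsq; unfold hNbr vNbr
  simp only [abs_eq_max_neg] at hadj
  simp only [Prod.ext_iff]
  try dsimp at *
  omega

lemma tiling_tail_partner {n : ℕ} {A t : ℤ × ℤ → ℤ × ℤ} (hA : IsArrowField n A)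
    (ht : IsTiling n t) (harr : ∀ c, aztecCell (n+1) c → tilingArrowInner n t c = A c)
    {c : ℤ × ℤ} (hc : aztecCell n c) :
    tailOf n A (t c) = tailOf n A c := by
  obtain ⟨htc, hinv, hadj⟩ := ht.1 c hc
  have hsq1 := tiling_partner hA ht harr hc
  have hsq2 := tiling_partner hA ht harr htc
  rw [hinv] at hsq2
  obtain ⟨h1, h2, hMint, _⟩ := tail_spec hA hc
  obtain ⟨g1, g2, hNint, _⟩ := tail_spec hA htc
  have hMpar := hMint.1.2
  have hNpar := hNint.1.2
  unfold Adjacent at hadj; unfold SqCorner at hsq1 hsq2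
  simp only [abs_eq_max_neg] at hadj
  rw [Prod.ext_iff]
  omega

end AuxDev6
section AuxDev7

lemma rep_consistent {n : ℕ} {A t : ℤ × ℤ → ℤ × ℤ} (hA : IsArrowField n A) (hin : Inward n A)
    (ht : IsTiling n t) (harr : ∀ c, aztecCell (n+1) c → tilingArrowInner n t c = A c)
    {M : ℤ × ℤ} (hMint : InteriorNode n M) (hrep : Repelling A M) {c : ℤ × ℤ}
    (p1 : c.1 = M.1 - 1 ∨ c.1 = M.1) (p2 : c.2 = M.2 - 1 ∨ c.2 = M.2) :
    t c = hNbr M c ↔ t (M.1 - 1, M.2 - 1) = (M.1, M.2 - 1) := by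
  obtain ⟨m1, m2⟩ := M
  dsimp at p1 p2 ⊢
  obtain ⟨hSW, hSWt⟩ := repelling_cells (d := ((m1:ℤ)-1, m2-1)) hA hin hMint hrep
    (by dsimp; omega) (by dsimp; omega)
  obtain ⟨hSE, hSEt⟩ := repelling_cells (d := ((m1:ℤ), m2-1)) hA hin hMint hrep
    (by dsimp; omega) (by dsimp; omega)
  obtain ⟨hNW, hNWt⟩ := repelling_cells (d := ((m1:ℤ)-1, m2)) hA hin hMint hrep
    (by dsimp; omega) (by dsimp; omega)
  obtain ⟨hNE, hNEt⟩ := repelling_cells (d := ((m1:ℤ), m2)) hA hin hMint hrep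
    (by dsimp; omega) (by dsimp; omega)
  have eSWh : hNbr ((m1:ℤ), m2) (m1-1, m2-1) = (m1, m2-1) := by
    unfold hNbr; dsimp only; simp only [Prod.mk.injEq, and_true, true_and]; omega
  have eSWv : vNbr ((m1:ℤ), m2) (m1-1, m2-1) = (m1-1, m2) := by
    unfold vNbr; dsimp only; simp only [Prod.mk.injEq, and_true, true_and]; omega
  have eSEh : hNbr ((m1:ℤ), m2) (m1, m2-1) = (m1-1, m2-1) := by
    unfold hNbr; dsimp only; simp only [Prod.mk.injEq, and_true, true_and]; omega
  have eNWh : hNbr ((m1:ℤ), m2) (m1-1, m2) = (m1, m2) := by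
    unfold hNbr; dsimp only; simp only [Prod.mk.injEq, and_true, true_and]; omega
  have eNWv : vNbr ((m1:ℤ), m2) (m1-1, m2) = (m1-1, m2-1) := by
    unfold vNbr; dsimp only; simp only [Prod.mk.injEq, and_true, true_and]; omega
  have eNEh : hNbr ((m1:ℤ), m2) (m1, m2) = (m1-1, m2) := by
    unfold hNbr; dsimp only; simp only [Prod.mk.injEq, and_true, true_and]; omega
  have eNEv : vNbr ((m1:ℤ), m2) (m1, m2) = (m1, m2-1) := by
    unfold vNbr; dsimp only; simp only [Prod.mk.injEq, and_true, true_and]; omega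
  have cSW := tiling_cases hA ht harr hSW
  rw [hSWt, eSWh, eSWv] at cSW
  have hiSW := (ht.1 _ hSW).2.1
  rcases p1 with p1 | p1 <;> rcases p2 with p2 | p2
  · -- c = SW
    obtain rfl : c = (m1-1, m2-1) := Prod.ext_iff.mpr ⟨p1, p2⟩
    rw [eSWh]
  · -- c = NW
    obtain rfl : c = (m1-1, m2) := Prod.ext_iff.mpr ⟨p1, p2⟩
    rw [eNWh]
    have cNW := tiling_cases hA ht harr hNW
    rw [hNWt, eNWh, eNWv] at cNW
    have hiNW := (ht.1 _ hNW).2.1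
    constructor
    · intro h
      refine cSW.resolve_right fun hsw => ?_
      rw [hsw] at hiSW; rw [h] at hiSW
      simp only [Prod.mk.injEq] at hiSW; omega
    · intro h
      refine cNW.resolve_right fun hnw => ?_
      rw [hnw] at hiNW; rw [h] at hiNW
      simp only [Prod.mk.injEq] at hiNW; omega
  · -- c = SE
    obtain rfl : c = (m1, m2-1) := Prod.ext_iff.mpr ⟨p1, p2⟩
    rw [eSEh]
    have hiSE := (ht.1 _ hSE).2.1
    constructor
    · intro h; rw [h] at hiSE; exact hiSE
    · intro h; rw [h] at hiSW; exact hiSW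
  · -- c = NE
    obtain rfl : c = (m1, m2) := Prod.ext_iff.mpr ⟨p1, p2⟩
    rw [eNEh]
    have cNE := tiling_cases hA ht harr hNE
    rw [hNEt, eNEh, eNEv] at cNE
    have hiNE := (ht.1 _ hNE).2.1
    constructor
    · intro h
      rw [h] at hiNE
      refine cSW.resolve_right fun hsw => ?_
      rw [hsw] at hiSW; rw [hiNE] at hiSW
      simp only [Prod.mk.injEq] at hiSW; omega
    · intro h
      rw [h] at hiSW
      refine cNE.resolve_right fun hne => ?_
      rw [hne] at hiNE; rw [hiSW] at hiNE
      simp only [Prod.mk.injEq] at hiNE; omega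

lemma tiling_eq_buildT {n : ℕ} {A t : ℤ × ℤ → ℤ × ℤ} (hA : IsArrowField n A) (hin : Inward n A)
    (ht : IsTiling n t) (harr : ∀ c, aztecCell (n+1) c → tilingArrowInner n t c = A c)
    (f : ℤ × ℤ → Bool)
    (hf : ∀ M, InteriorNode n M → Repelling A M →
      (f M = true ↔ t (M.1 - 1, M.2 - 1) = (M.1, M.2 - 1))) :
    t = buildT n A f := by
  funext c
  by_cases hc : aztecCell n c
  · obtain ⟨h1, h2, hMint, hAc⟩ := tail_spec hA hc
    set M := tailOf n A c with hM
    have p1 : c.1 = M.1 - 1 ∨ c.1 = M.1 := by omega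
    have p2 : c.2 = M.2 - 1 ∨ c.2 = M.2 := by omega
    have hcases := tiling_cases hA ht harr hc
    rcases hA.2 M hMint with hatt | hrep | htr
    · exact (((tail_iff' hA hMint p1 p2 rfl).2.mpr (attracting_toward hatt p1 p2)) hM.symm).elim
    · rw [buildT_of_rep hc (by rw [← hM]; exact hrep), ← hM]
      have hcons := rep_consistent hA hin ht harr hMint hrep p1 p2
      by_cases hfb : f M = true
      · rw [if_pos hfb]; exact hcons.mpr ((hf M hMint hrep).mp hfb)
      · rw [if_neg hfb]
        exact hcases.resolve_left fun h => hfb ((hf M hMint hrep).mpr (hcons.mp h))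
    · rw [buildT_of_trans hc (by rw [← hM]; exact fun hr => rep_not_trans hr htr), ← hM]
      have htt := tiling_tail_partner hA ht harr hc
      have hxor := transient_xor hA hMint htr p1 p2 hM.symm
      rcases hcases with h | h
      · rw [if_pos (by rw [← h]; exact htt)]; exact h
      · have hvt : tailOf n A (vNbr M c) = M := by rw [← h]; exact htt
        rw [if_neg (fun hh => (hxor.1.mp hh) hvt)]
        exact h
  · rw [ht.2 c hc, buildT_out hc]

end AuxDev7
/-- Given an inward pointing field of arrows `A` on `A_{n+1}`, there are exactly
`2 ^ r(A)` domino tilings of `A_n` whose associated field of arrows equals `A`. -/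
theorem tilings_with_inward_field (n : ℕ) (hn : 1 ≤ n) (A : ℤ × ℤ → ℤ × ℤ)
    (hA : IsArrowField n A) (hin : Inward n A) :
    Nat.card {t : ℤ × ℤ → ℤ × ℤ // IsTiling n t ∧
        ∀ c, aztecCell (n + 1) c → tilingArrowInner n t c = A c} = 2 ^ repCount n A := by
  classical
  set R := {N : ℤ × ℤ | InteriorNode n N ∧ Repelling A N} with hR
  have hfin : R.Finite := by
    apply Set.Finite.subset (Set.finite_Icc (α := ℤ × ℤ) (-(n:ℤ)-1, -(n:ℤ)-1) ((n:ℤ)+1, (n:ℤ)+1))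
    rintro ⟨q1, q2⟩ ⟨⟨⟨hp, _⟩, _⟩, _⟩
    simp only [Set.mem_Icc, Prod.mk_le_mk]
    unfold aztecPoint at hp
    simp only [abs_eq_max_neg] at hp
    try dsimp at hp
    push_cast at hp
    omega
  haveI : Finite ↥R := hfin.to_subtype
  let ext : (↥R → Bool) → (ℤ × ℤ → Bool) := fun f M => if h : M ∈ R then f ⟨M, h⟩ else true
  have e : {t : ℤ × ℤ → ℤ × ℤ // IsTiling n t ∧ ∀ c, aztecCell (n + 1) c →
      tilingArrowInner n t c = A c} ≃ (↥R → Bool) :=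
    { toFun := fun t M =>
        decide (t.1 ((M : ℤ × ℤ).1 - 1, (M : ℤ × ℤ).2 - 1) = ((M : ℤ × ℤ).1, (M : ℤ × ℤ).2 - 1))
      invFun := fun f => ⟨buildT n A (ext f), buildT_P hA hin _⟩
      left_inv := by
        rintro ⟨t, ht, harr⟩
        apply Subtype.ext
        try dsimp
        refine (tiling_eq_buildT hA hin ht harr _ ?_).symm
        intro M hMint hrep
        have hMR : M ∈ R := ⟨hMint, hrep⟩
        simp only [ext, dif_pos hMR]
        simp [decide_eq_true_eq]
      right_inv := by
        intro f
        funext M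
        obtain ⟨⟨m1, m2⟩, hMR⟩ := M
        dsimp
        obtain ⟨hSW, hSWt⟩ := repelling_cells (d := ((m1:ℤ)-1, m2-1)) hA hin hMR.1 hMR.2
          (by dsimp; omega) (by dsimp; omega)
        simp only [buildT_of_rep hSW (by rw [hSWt]; exact hMR.2), hSWt]
        have hext : ext f (m1, m2) = f ⟨(m1, m2), hMR⟩ := dif_pos hMR
        rw [hext]
        have eSWh : hNbr ((m1:ℤ), m2) (m1-1, m2-1) = (m1, m2-1) := by
          unfold hNbr; dsimp only; simp only [Prod.mk.injEq, and_true, true_and]; omega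
        have hvne : vNbr ((m1:ℤ), m2) (m1-1, m2-1) ≠ (m1, m2-1) := by
          unfold vNbr; dsimp only; simp only [ne_eq, Prod.mk.injEq]; omega
        by_cases hb : f ⟨(m1, m2), hMR⟩ = true
        · rw [if_pos hb, hb, eSWh]
          simp
        · have hb' : f ⟨(m1, m2), hMR⟩ = false := by
            revert hb; cases f ⟨(m1, m2), hMR⟩ <;> simp
          rw [if_neg hb, hb', decide_eq_false hvne] }
  rw [Nat.card_congr e, Nat.card_fun, Nat.card_eq_fintype_card (α := Bool), Fintype.card_bool]
  congr 1
end
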